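/- Let U and V be finite subsets of a commutative group G, and let X ⊆ U be a nonempty subset such that |X+V|/|X| ≤ |X'+V|/|X'| for all nonempty subsets X' ⊆ X. Then for any finite set W ⊆ G, |X+V+W| ≤ |X+V|·|X+W|/|X|. -/

import Mathlib

open Finset Pointwise

theorem plunnecke_ineq {G : Type*} [AddCommGroup G] [DecidableEq G]
    (U V W X : Finset G) (hXU : X ⊆ U) (hX : X.Nonempty)
    (hmin : ∀ X' ⊆ X, X'.Nonempty →
      ((X + V).card : ℝ) / X.card ≤ ((X' + V).card : ℝ) / X'.card) :
    ((X + V + W).card : ℝ) ≤ ((X + V).card : ℝ) * (X + W).card / X.card := by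
  have hX0 : (0 : ℝ) < X.card := by exact_mod_cast hX.card_pos
  have key : ∀ X' ⊆ X, #(X + V) * #X' ≤ #(X' + V) * #X := by
    intro X' hX'
    rcases X'.eq_empty_or_nonempty with rfl | hne
    · simp
    · have h := hmin X' hX' hne
      have hX'0 : (0 : ℝ) < X'.card := by exact_mod_cast hne.card_pos
      rw [div_le_div_iff₀ hX0 hX'0] at h
      exact_mod_cast h
  have h := pluennecke_petridis_inequality_add W key
  rw [show W + X + V = X + V + W by abel, add_comm W X] at h
  rw [le_div_iff₀ hX0]
  exact_mod_cast h
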